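/- arXiv:1302.3514 — 2 statements merged into one kernel-verified Lean document; each statement's English description precedes it below -/
import Mathlib

section
/- Let a, a' > 0. If W ~ β²_{a+a', a}, X ~ β¹_{a, a'}, and W' ~ β²_{a+a', a'} are independent real random variables, then 1/(1 + W/(1 + W'·X)) has the same distribution as X. -/
open MeasureTheory ProbabilityTheory Real Set Filter Topology

noncomputable def gammaDens (p σ y : ℝ) : ℝ :=
  if 0 < y then σ ^ p / Real.Gamma p * Real.exp (-(σ * y)) * y ^ (p - 1) else 0

noncomputable def gammaM (p σ : ℝ) : Measure ℝ :=
  MeasureTheory.volume.withDensity fun y => ENNReal.ofReal (gammaDens p σ y)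

noncomputable def beta1Dens (p q x : ℝ) : ℝ :=
  if 0 < x ∧ x < 1 then
    Real.Gamma (p + q) / (Real.Gamma p * Real.Gamma q) * x ^ (p - 1) * (1 - x) ^ (q - 1)
  else 0

noncomputable def beta1 (p q : ℝ) : Measure ℝ :=
  MeasureTheory.volume.withDensity fun x => ENNReal.ofReal (beta1Dens p q x)

noncomputable def beta2Dens (p q y : ℝ) : ℝ :=
  if 0 < y then
    Real.Gamma (p + q) / (Real.Gamma p * Real.Gamma q) * y ^ (p - 1) * (1 + y) ^ (-(p + q))
  else 0

noncomputable def beta2 (p q : ℝ) : Measure ℝ :=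
  MeasureTheory.volume.withDensity fun y => ENNReal.ofReal (beta2Dens p q y)

/-- Pochhammer (rising factorial) symbol `(a)_n`. -/
noncomputable def poch (a : ℝ) (n : ℕ) : ℝ := ∏ i ∈ Finset.range n, (a + (i : ℝ))

/-- Gauss hypergeometric function `₂F₁(a,b;c;x)`. -/
noncomputable def F21 (a b c x : ℝ) : ℝ :=
  ∑' n : ℕ, poch a n * poch b n / ((n.factorial : ℝ) * poch c n) * x ^ n

/-- Generalized hypergeometric `₃F₂(a₁,a₂,a₃;b₁,b₂;1)` at unit argument. -/
noncomputable def F32one (a1 a2 a3 b1 b2 : ℝ) : ℝ :=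
  ∑' n : ℕ, poch a1 n * poch a2 n * poch a3 n /
    ((n.factorial : ℝ) * poch b1 n * poch b2 n)

/-- Normalizing constant of the real beta-hypergeometric distribution. -/
noncomputable def Cbh (a a' b : ℝ) : ℝ :=
  Real.Gamma (a + b) / (Real.Gamma a * Real.Gamma b * F32one a a b (a + b) (a + a'))

noncomputable def bhDens (a a' b x : ℝ) : ℝ :=
  if 0 < x ∧ x < 1 then
    Cbh a a' b * x ^ (a - 1) * (1 - x) ^ (b - 1) * F21 a b (a + a') x
  else 0

/-- The real beta-hypergeometric distribution `μ_{a,a',b}`. -/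
noncomputable def bhMeasure (a a' b : ℝ) : Measure ℝ :=
  MeasureTheory.volume.withDensity fun x => ENNReal.ofReal (bhDens a a' b x)

open Function
open scoped ENNReal

/-- 1D change of variables for lintegral. -/
theorem lintegral_image_1d {s : Set ℝ} {f f' : ℝ → ℝ} (hs : MeasurableSet s)
    (hf' : ∀ x ∈ s, HasDerivWithinAt f (f' x) s x) (hf : Set.InjOn f s) (g : ℝ → ℝ≥0∞) :
    ∫⁻ x in f '' s, g x = ∫⁻ x in s, ENNReal.ofReal |f' x| * g (f x) := by
  simpa only [ContinuousLinearMap.det_toSpanSingleton] using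
    lintegral_image_eq_lintegral_abs_det_fderiv_mul volume hs
      (fun x hx => (hf' x hx).hasFDerivWithinAt) hf g

theorem map_const_mul_withDensity {g : ℝ → ℝ≥0∞} {c : ℝ} (hc : 0 < c) :
    (volume.withDensity g).map (fun y => c * y) =
      volume.withDensity (fun u => ENNReal.ofReal c⁻¹ * g (c⁻¹ * u)) := by
  ext s hs
  rw [Measure.map_apply (measurable_const_mul c) hs,
    withDensity_apply _ ((measurable_const_mul c) hs), withDensity_apply _ hs]
  have himg : (fun y => c * y) '' ((fun y => c * y) ⁻¹' s) = s :=
    Set.image_preimage_eq s (mul_left_surjective₀ hc.ne')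
  have key := lintegral_image_1d ((measurable_const_mul c) hs)
    (fun x (_ : x ∈ (fun y => c * y) ⁻¹' s) =>
      (((hasDerivAt_id x).const_mul c).hasDerivWithinAt : HasDerivWithinAt (fun y => c * y)
        (c * 1) ((fun y => c * y) ⁻¹' s) x))
    ((mul_right_injective₀ hc.ne').injOn) (fun u => ENNReal.ofReal c⁻¹ * g (c⁻¹ * u))
  simp only [id_eq, mul_one] at key
  rw [himg] at key
  rw [key]
  refine (setLIntegral_congr_fun ((measurable_const_mul c) hs) (fun y _ => ?_)).symm
  rw [← mul_assoc, ← ENNReal.ofReal_mul (abs_nonneg c), abs_of_pos hc,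
    mul_inv_cancel₀ hc.ne', ENNReal.ofReal_one, one_mul, inv_mul_cancel_left₀ hc.ne']

theorem mix_lemma {ν ρ : Measure ℝ} [SFinite ν] [SFinite ρ] {m : ℝ → ℝ → ℝ}
    (hm : Measurable (uncurry m)) {k : ℝ → ℝ → ℝ≥0∞} (hk : Measurable (uncurry k))
    (h : ∀ᵐ x ∂ν, ρ.map (m x) = volume.withDensity (k x)) :
    (ν.prod ρ).map (fun p => m p.1 p.2) = volume.withDensity (fun u => ∫⁻ x, k x u ∂ν) := by
  ext s hs
  have hmm : Measurable fun p : ℝ × ℝ => m p.1 p.2 := hm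
  rw [Measure.map_apply hmm hs, Measure.prod_apply (hmm hs),
    withDensity_apply _ hs]
  have step1 : ∀ᵐ x ∂ν, ρ (Prod.mk x ⁻¹' ((fun p : ℝ × ℝ => m p.1 p.2) ⁻¹' s))
      = ∫⁻ u in s, k x u := by
    filter_upwards [h] with x hx
    have : Prod.mk x ⁻¹' ((fun p : ℝ × ℝ => m p.1 p.2) ⁻¹' s) = (m x) ⁻¹' s := rfl
    rw [this, ← Measure.map_apply (hm.of_uncurry_left) hs, hx,
      withDensity_apply _ hs]
  rw [lintegral_congr_ae step1, lintegral_lintegral_swap hk.aemeasurable]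

theorem real_betaIntegral {p q : ℝ} (hp : 0 < p) (hq : 0 < q) :
    ∫ x in (0:ℝ)..1, x ^ (p - 1) * (1 - x) ^ (q - 1)
      = Real.Gamma p * Real.Gamma q / Real.Gamma (p + q) := by
  have hp' : 0 < (p : ℂ).re := by simpa using hp
  have hq' : 0 < (q : ℂ).re := by simpa using hq
  have hcongr : ∀ x ∈ Set.uIcc (0:ℝ) 1,
      (x : ℂ) ^ ((p : ℂ) - 1) * (1 - (x : ℂ)) ^ ((q : ℂ) - 1)
        = ((x ^ (p - 1) * (1 - x) ^ (q - 1) : ℝ) : ℂ) := by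
    intro x hx
    rw [Set.uIcc_of_le (by norm_num : (0:ℝ) ≤ 1)] at hx
    push_cast
    rw [Complex.ofReal_cpow hx.1, Complex.ofReal_cpow (by linarith [hx.2] : (0:ℝ) ≤ 1 - x)]
    push_cast
    ring
  have h1 : Complex.betaIntegral p q
      = ((∫ x in (0:ℝ)..1, x ^ (p - 1) * (1 - x) ^ (q - 1) : ℝ) : ℂ) := by
    rw [Complex.betaIntegral, ← intervalIntegral.integral_ofReal]
    exact intervalIntegral.integral_congr hcongr
  have h2 := Complex.Gamma_mul_Gamma_eq_betaIntegral hp' hq'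
  rw [h1, ← Complex.ofReal_add, Complex.Gamma_ofReal, Complex.Gamma_ofReal,
    Complex.Gamma_ofReal, ← Complex.ofReal_mul, ← Complex.ofReal_mul] at h2
  have h3 := Complex.ofReal_injective h2
  have hG : Real.Gamma (p + q) ≠ 0 := (Real.Gamma_pos_of_pos (by linarith)).ne'
  field_simp at h3 ⊢
  linarith [h3]

theorem integrableOn_beta {p q : ℝ} (hp : 0 < p) (hq : 0 < q) :
    IntegrableOn (fun x : ℝ => x ^ (p - 1) * (1 - x) ^ (q - 1)) (Set.Ioc 0 1) := by
  have hp' : 0 < (p : ℂ).re := by simpa using hp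
  have hq' : 0 < (q : ℂ).re := by simpa using hq
  have h := (Complex.betaIntegral_convergent hp' hq').1
  have h2 := h.re
  refine h2.congr ((ae_restrict_iff' measurableSet_Ioc).2 (ae_of_all _ fun x hx => ?_))
  show RCLike.re ((x:ℂ) ^ ((p:ℂ) - 1) * (1 - (x:ℂ)) ^ ((q:ℂ) - 1)) = x ^ (p - 1) * (1 - x) ^ (q - 1)
  rw [show (x : ℂ) ^ ((p : ℂ) - 1) * (1 - (x : ℂ)) ^ ((q : ℂ) - 1)
        = ((x ^ (p - 1) * (1 - x) ^ (q - 1) : ℝ) : ℂ) by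
    push_cast
    rw [Complex.ofReal_cpow (le_of_lt hx.1), Complex.ofReal_cpow (by linarith [hx.2] : (0:ℝ) ≤ 1 - x)]
    push_cast; ring]
  simp

theorem K1 {p q : ℝ} (hp : 0 < p) (hq : 0 < q) :
    ∫⁻ x in Set.Ioo (0:ℝ) 1, ENNReal.ofReal (x ^ (p - 1) * (1 - x) ^ (q - 1))
      = ENNReal.ofReal (Real.Gamma p * Real.Gamma q / Real.Gamma (p + q)) := by
  rw [← real_betaIntegral hp hq,
    intervalIntegral.integral_of_le (by norm_num : (0:ℝ) ≤ 1)]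
  rw [setLIntegral_congr (Ioo_ae_eq_Ioc (a := (0:ℝ)) (b := (1:ℝ)))]
  rw [← ofReal_integral_eq_lintegral_ofReal (integrableOn_beta hp hq)]
  exact (ae_restrict_iff' measurableSet_Ioc).2 (ae_of_all _ fun x hx =>
    mul_nonneg (Real.rpow_nonneg hx.1.le _) (Real.rpow_nonneg (by linarith [hx.2]) _))

theorem image_div_one_add : (fun t : ℝ => t / (1 + t)) '' (Set.Ioi 0) = Set.Ioo 0 1 := by
  ext x
  constructor
  · rintro ⟨t, ht, rfl⟩
    have ht' : (0:ℝ) < 1 + t := by linarith [Set.mem_Ioi.1 ht]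
    constructor
    · exact div_pos (Set.mem_Ioi.1 ht) ht'
    · rw [div_lt_one ht']; linarith [Set.mem_Ioi.1 ht]
  · rintro ⟨hx0, hx1⟩
    refine ⟨x / (1 - x), ?_, ?_⟩
    · exact Set.mem_Ioi.2 (div_pos hx0 (by linarith))
    · have h1 : (1:ℝ) - x ≠ 0 := by linarith
      field_simp
      ring

theorem injOn_div_one_add : Set.InjOn (fun t : ℝ => t / (1 + t)) (Set.Ioi 0) := by
  intro a ha b hb h
  have ha' : (0:ℝ) < 1 + a := by linarith [Set.mem_Ioi.1 ha]
  have hb' : (0:ℝ) < 1 + b := by linarith [Set.mem_Ioi.1 hb]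
  field_simp at h
  linarith

theorem hasDeriv_div_one_add {t : ℝ} (ht : (0:ℝ) < t) :
    HasDerivAt (fun t : ℝ => t / (1 + t)) (((1 + t) ^ 2)⁻¹) t := by
  have h : (0:ℝ) < 1 + t := by linarith
  have := (hasDerivAt_id t).div ((hasDerivAt_id t).const_add 1) h.ne'
  refine this.congr_deriv ?_
  simp only [id]
  ring

theorem K2one {p q : ℝ} (hp : 0 < p) (hq : 0 < q) :
    ∫⁻ t in Set.Ioi (0:ℝ), ENNReal.ofReal (t ^ (p - 1) * (1 + t) ^ (-(p + q)))
      = ENNReal.ofReal (Real.Gamma p * Real.Gamma q / Real.Gamma (p + q)) := by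
  rw [← K1 hp hq, ← image_div_one_add,
    lintegral_image_1d measurableSet_Ioi
      (fun t ht => (hasDeriv_div_one_add (Set.mem_Ioi.1 ht)).hasDerivWithinAt)
      injOn_div_one_add]
  refine setLIntegral_congr_fun measurableSet_Ioi (fun t ht => ?_)
  have ht0 : (0:ℝ) < t := Set.mem_Ioi.1 ht
  have h1t : (0:ℝ) < 1 + t := by linarith
  rw [← ENNReal.ofReal_mul (abs_nonneg _)]
  congr 1
  have e1 : (t / (1 + t)) ^ (p - 1) = t ^ (p - 1) * (1 + t) ^ (-(p - 1)) := by
    rw [Real.div_rpow ht0.le h1t.le, Real.rpow_neg h1t.le, div_eq_mul_inv]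
  have e2 : (1 - t / (1 + t)) ^ (q - 1) = (1 + t) ^ (-(q - 1)) := by
    have : (1:ℝ) - t / (1 + t) = (1 + t)⁻¹ := by field_simp; ring
    rw [this, ← Real.rpow_neg_one (1+t), ← Real.rpow_mul h1t.le]
    norm_num
  have e3 : (1+t) ^ (-2:ℝ) * ((1+t) ^ (-(p-1)) * (1+t) ^ (-(q-1))) = (1+t) ^ (-(p+q)) := by
    rw [← Real.rpow_add h1t, ← Real.rpow_add h1t]
    ring_nf
  rw [abs_of_pos (by positivity : (0:ℝ) < ((1 + t) ^ 2)⁻¹), e1, e2]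
  rw [show ((1 + t)^2)⁻¹ = (1 + t) ^ (-2 : ℝ) by
    rw [← Real.rpow_natCast (1+t) 2, ← Real.rpow_neg h1t.le]; norm_num]
  rw [← e3]
  ring

theorem K2 {p q c : ℝ} (hp : 0 < p) (hq : 0 < q) (hc : 0 < c) :
    ∫⁻ t in Set.Ioi (0:ℝ), ENNReal.ofReal (t ^ (p - 1) * (c + t) ^ (-(p + q)))
      = ENNReal.ofReal (c ^ (-q) * (Real.Gamma p * Real.Gamma q / Real.Gamma (p + q))) := by
  have himg : (fun u : ℝ => c * u) '' (Set.Ioi 0) = Set.Ioi 0 := by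
    ext x
    simp only [Set.mem_image, Set.mem_Ioi]
    constructor
    · rintro ⟨u, hu, rfl⟩; positivity
    · intro hx; exact ⟨x / c, by positivity, by field_simp⟩
  have hder : ∀ u ∈ Set.Ioi (0:ℝ),
      HasDerivWithinAt (fun y : ℝ => c * y) (c * 1) (Set.Ioi 0) u := fun u _ => by
    simpa using ((hasDerivAt_id u).const_mul c).hasDerivWithinAt
  rw [← himg, lintegral_image_1d measurableSet_Ioi hder
      ((mul_right_injective₀ hc.ne').injOn)]
  have : ∀ u ∈ Set.Ioi (0:ℝ),
      ENNReal.ofReal |c * 1| * ENNReal.ofReal ((c * u) ^ (p - 1) * (c + c * u) ^ (-(p + q)))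
        = ENNReal.ofReal (c ^ (-q)) * ENNReal.ofReal (u ^ (p - 1) * (1 + u) ^ (-(p + q))) := by
    intro u hu
    have hu0 : (0:ℝ) < u := hu
    have h1u : (0:ℝ) < 1 + u := by linarith
    rw [mul_one, abs_of_pos hc, ← ENNReal.ofReal_mul hc.le, ← ENNReal.ofReal_mul (by positivity)]
    congr 1
    rw [show c + c * u = c * (1 + u) by ring, Real.mul_rpow hc.le hu0.le,
      Real.mul_rpow hc.le h1u.le]
    rw [show c * (c ^ (p-1) * u ^ (p-1) * (c ^ (-(p+q)) * (1+u) ^ (-(p+q))))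
        = (c * c ^ (p-1) * c ^ (-(p+q))) * (u ^ (p-1) * (1+u) ^ (-(p+q))) by ring]
    congr 1
    rw [show c * c ^ (p-1) * c ^ (-(p+q)) = c ^ (1+(p-1)) * c ^ (-(p+q)) by
      rw [Real.rpow_add hc, Real.rpow_one], ← Real.rpow_add hc]
    ring_nf
  rw [setLIntegral_congr_fun measurableSet_Ioi this,
    lintegral_const_mul' _ _ ENNReal.ofReal_ne_top, K2one hp hq,
    ← ENNReal.ofReal_mul (Real.rpow_nonneg hc.le _)]

theorem lintegral_Ioi_of_support {F : ℝ → ℝ≥0∞} (h : ∀ x ≤ (0:ℝ), F x = 0) :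
    ∫⁻ x, F x = ∫⁻ x in Set.Ioi 0, F x := by
  rw [← lintegral_indicator measurableSet_Ioi]
  refine lintegral_congr fun x => ?_
  rw [Set.indicator_apply]
  split_ifs with hx
  · rfl
  · exact h x (not_lt.1 hx)

theorem measurable_beta1Dens (p q : ℝ) : Measurable (beta1Dens p q) := by
  unfold beta1Dens
  refine Measurable.ite ?_ ?_ measurable_const
  · exact (measurableSet_Ioi.inter measurableSet_Iio :
      MeasurableSet ({x : ℝ | 0 < x} ∩ {x : ℝ | x < 1}))
  · fun_prop

theorem measurable_beta2Dens (p q : ℝ) : Measurable (beta2Dens p q) := by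
  unfold beta2Dens
  refine Measurable.ite measurableSet_Ioi ?_ measurable_const
  fun_prop

theorem image_one_div_one_add :
    (fun y : ℝ => 1 / (1 + y)) '' (Set.Ioi 0) = Set.Ioo 0 1 := by
  ext x
  constructor
  · rintro ⟨y, hy, rfl⟩
    have hy0 : (0:ℝ) < y := hy
    have h1y : (0:ℝ) < 1 + y := by linarith
    constructor
    · positivity
    · rw [div_lt_one h1y]; linarith
  · rintro ⟨hx0, hx1⟩
    refine ⟨(1 - x) / x, Set.mem_Ioi.2 (div_pos (by linarith) hx0), ?_⟩
    show 1 / (1 + (1 - x) / x) = x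
    rw [show 1 + (1 - x) / x = 1 / x by field_simp; ring]
    simp [hx0.ne']

theorem injOn_one_div_one_add :
    Set.InjOn (fun y : ℝ => 1 / (1 + y)) (Set.Ioi 0) := by
  intro a ha b hb h
  have ha' : (0:ℝ) < 1 + a := by linarith [Set.mem_Ioi.1 ha]
  have hb' : (0:ℝ) < 1 + b := by linarith [Set.mem_Ioi.1 hb]
  field_simp at h
  linarith

theorem hasDeriv_one_div_one_add {y : ℝ} (hy : (0:ℝ) < y) :
    HasDerivAt (fun y : ℝ => 1 / (1 + y)) (-1 / (1 + y) ^ 2) y := by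
  have h : (1:ℝ) + y ≠ 0 := by positivity
  have := (hasDerivAt_const y (1:ℝ)).div ((hasDerivAt_id y).const_add 1) h
  refine this.congr_deriv ?_
  simp

theorem L3 {a a' : ℝ} (ha : 0 < a) (ha' : 0 < a') :
    (beta2 a' a).map (fun y => 1 / (1 + y)) = beta1 a a' := by
  classical
  have hf : Measurable (fun y : ℝ => 1 / (1 + y)) := by fun_prop
  ext s hs
  rw [Measure.map_apply hf hs, beta2, beta1, withDensity_apply _ (hf hs),
    withDensity_apply _ hs]
  have hsupp2 : ∀ x ≤ (0:ℝ), ((fun y : ℝ => 1 / (1 + y)) ⁻¹' s).indicator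
      (fun y => ENNReal.ofReal (beta2Dens a' a y)) x = 0 := by
    intro x hx
    by_cases hmem : x ∈ (fun y : ℝ => 1 / (1 + y)) ⁻¹' s
    · rw [Set.indicator_of_mem hmem, beta2Dens, if_neg (not_lt.2 hx)]; simp
    · exact Set.indicator_of_notMem hmem _
  have hsupp1 : ∀ u, u ∉ Set.Ioo (0:ℝ) 1 → s.indicator
      (fun u => ENNReal.ofReal (beta1Dens a a' u)) u = 0 := by
    intro u hu
    by_cases hmem : u ∈ s
    · rw [Set.indicator_of_mem hmem, beta1Dens, if_neg (by simpa [Set.mem_Ioo] using hu)]; simp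
    · exact Set.indicator_of_notMem hmem _
  rw [← lintegral_indicator (hf hs), ← lintegral_indicator hs]
  rw [lintegral_Ioi_of_support hsupp2]
  have hrhs : ∫⁻ u, s.indicator (fun u => ENNReal.ofReal (beta1Dens a a' u)) u
      = ∫⁻ u in Set.Ioo (0:ℝ) 1, s.indicator (fun u => ENNReal.ofReal (beta1Dens a a' u)) u := by
    rw [← lintegral_indicator measurableSet_Ioo]
    refine lintegral_congr fun u => ?_
    by_cases hu : u ∈ Set.Ioo (0:ℝ) 1
    · rw [Set.indicator_of_mem hu]
    · rw [Set.indicator_of_notMem hu, hsupp1 u hu]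
  rw [hrhs, ← image_one_div_one_add,
    lintegral_image_1d measurableSet_Ioi
      (fun y hy => (hasDeriv_one_div_one_add (Set.mem_Ioi.1 hy)).hasDerivWithinAt)
      injOn_one_div_one_add]
  refine setLIntegral_congr_fun measurableSet_Ioi (fun y hy => ?_)
  have hy0 : (0:ℝ) < y := hy
  have h1y : (0:ℝ) < 1 + y := by linarith
  rw [Set.indicator_apply, Set.indicator_apply]
  simp only [Set.mem_preimage]
  split_ifs with hmem
  · -- main density computation
    rw [← ENNReal.ofReal_mul (abs_nonneg _)]
    congr 1
    rw [beta2Dens, if_pos hy0, beta1Dens, if_pos ⟨by positivity, by rw [div_lt_one h1y]; linarith⟩]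
    have e0 : |(-1 : ℝ) / (1 + y) ^ 2| = ((1 + y) ^ 2)⁻¹ := by
      rw [abs_div, abs_neg, abs_one, abs_of_pos (by positivity : (0:ℝ) < (1+y)^2), one_div]
    have e1 : (1 / (1 + y)) ^ (a - 1) = (1 + y) ^ (-(a - 1)) := by
      rw [one_div, ← Real.rpow_neg_one (1 + y), ← Real.rpow_mul h1y.le]
      norm_num
    have e2 : (1 - 1 / (1 + y)) ^ (a' - 1) = y ^ (a' - 1) * (1 + y) ^ (-(a' - 1)) := by
      rw [show (1:ℝ) - 1 / (1 + y) = y / (1 + y) by field_simp; ring,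
        Real.div_rpow hy0.le h1y.le, Real.rpow_neg h1y.le, div_eq_mul_inv]
    have e4 : ((1 + y) ^ 2)⁻¹ = (1 + y) ^ (-2 : ℝ) := by
      rw [← Real.rpow_natCast (1 + y) 2, ← Real.rpow_neg h1y.le]; norm_num
    have e5 : (1 + y) ^ (-(a-1) : ℝ) * ((1 + y) ^ (-(a'-1) : ℝ) * (1 + y) ^ (-2 : ℝ))
        = (1 + y) ^ (-(a' + a)) := by
      rw [← Real.rpow_add h1y, ← Real.rpow_add h1y]
      ring_nf
    rw [e0, e1, e2, e4, ← e5, show a + a' = a' + a by ring]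
    ring
  · simp

instance beta1_sfinite (p q : ℝ) : SFinite (beta1 p q) := by
  unfold beta1; infer_instance

instance beta2_sfinite (p q : ℝ) : SFinite (beta2 p q) := by
  unfold beta2; infer_instance

theorem beta2_ae_pos (p q : ℝ) : ∀ᵐ x ∂(beta2 p q), 0 < x := by
  rw [ae_iff]
  have hset : {x : ℝ | ¬ 0 < x} = Set.Iic 0 := by ext x; simp [Set.mem_Iic]
  rw [beta2, hset, withDensity_apply _ measurableSet_Iic]
  rw [setLIntegral_congr_fun measurableSet_Iic (fun x hx => by
    rw [beta2Dens, if_neg (not_lt.2 (Set.mem_Iic.1 hx)), ENNReal.ofReal_zero])]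
  simp

theorem image_add_left {u : ℝ} : (fun t : ℝ => u + t) '' (Set.Ioi 0) = Set.Ioi u := by
  ext x
  simp only [Set.mem_image, Set.mem_Ioi]
  constructor
  · rintro ⟨t, ht, rfl⟩; linarith
  · intro hx; exact ⟨x - u, by linarith, by ring⟩

theorem translate_lintegral {u : ℝ} (G : ℝ → ℝ≥0∞) :
    ∫⁻ x in Set.Ioi u, G x = ∫⁻ t in Set.Ioi 0, G (u + t) := by
  have hder : ∀ t ∈ Set.Ioi (0:ℝ),
      HasDerivWithinAt (fun t : ℝ => u + t) 1 (Set.Ioi 0) t := fun t _ => by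
    simpa using ((hasDerivAt_id t).const_add u).hasDerivWithinAt
  rw [← image_add_left (u := u), lintegral_image_1d measurableSet_Ioi hder
    (fun a _ b _ h => by simpa using h) G]
  simp

theorem L1 {a a' : ℝ} (ha : 0 < a) (ha' : 0 < a') :
    ((beta2 (a + a') a').prod (beta1 a a')).map (fun p : ℝ × ℝ => p.1 * p.2)
      = beta2 a a' := by
  set k : ℝ → ℝ → ℝ≥0∞ :=
    fun x u => ENNReal.ofReal x⁻¹ * ENNReal.ofReal (beta1Dens a a' (x⁻¹ * u)) with hkdef
  have hk : Measurable (uncurry k) := by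
    refine Measurable.mul (f := fun p : ℝ × ℝ => ENNReal.ofReal p.1⁻¹)
      (g := fun p : ℝ × ℝ => ENNReal.ofReal (beta1Dens a a' (p.1⁻¹ * p.2))) ?_ ?_
    · exact measurable_fst.inv.ennreal_ofReal
    · exact ((measurable_beta1Dens a a').comp
        (measurable_fst.inv.mul measurable_snd)).ennreal_ofReal
  have hae : ∀ᵐ x ∂(beta2 (a + a') a'), (beta1 a a').map (fun y => x * y)
      = volume.withDensity (k x) := by
    filter_upwards [beta2_ae_pos (a + a') a'] with x hx
    rw [beta1, map_const_mul_withDensity hx]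
  have hmain := mix_lemma (m := fun x y => x * y)
    (measurable_fst.mul measurable_snd) hk hae
  rw [hmain, beta2]
  congr 1
  funext u
  have hdm : Measurable fun x => ENNReal.ofReal (beta2Dens (a + a') a' x) :=
    (measurable_beta2Dens _ _).ennreal_ofReal
  have hkm : Measurable fun x => k x u := hk.of_uncurry_right
  rw [lintegral_withDensity_eq_lintegral_mul volume hdm hkm]
  simp only [Pi.mul_apply]
  have hsupp : ∀ x ≤ (0:ℝ),
      ENNReal.ofReal (beta2Dens (a + a') a' x) * k x u = 0 := by
    intro x hx
    rw [beta2Dens, if_neg (not_lt.2 hx)]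
    simp
  rw [lintegral_Ioi_of_support hsupp]
  rcases le_or_gt u 0 with hu | hu
  · -- u ≤ 0 : both sides vanish
    rw [setLIntegral_congr_fun measurableSet_Ioi (fun x hx => ?_),
      lintegral_zero, beta2Dens, if_neg (not_lt.2 hu), ENNReal.ofReal_zero]
    have hx0 : (0:ℝ) < x := hx
    rw [hkdef]
    simp only
    rw [beta1Dens, if_neg (by
      rintro ⟨h1, -⟩
      have : x⁻¹ * u ≤ 0 := mul_nonpos_of_nonneg_of_nonpos (inv_pos.2 hx0).le hu
      linarith)]
    simp
  · -- u > 0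
    have hGpos : ∀ r : ℝ, 0 < r → Real.Gamma r ≠ 0 := fun r hr => (Real.Gamma_pos_of_pos hr).ne'
    rw [← Set.Ioc_union_Ioi_eq_Ioi hu.le,
      lintegral_union measurableSet_Ioi (Set.Ioc_disjoint_Ioi le_rfl)]
    have hzero1 : ∫⁻ x in Set.Ioc (0:ℝ) u,
        ENNReal.ofReal (beta2Dens (a + a') a' x) * k x u = 0 := by
      rw [setLIntegral_congr_fun measurableSet_Ioc (fun x hx => ?_), lintegral_zero]
      have hx0 : (0:ℝ) < x := hx.1
      rw [hkdef]
      simp only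
      rw [beta1Dens, if_neg (by
        rintro ⟨-, h2⟩
        rw [← div_eq_inv_mul, div_lt_one hx0] at h2
        linarith [hx.2])]
      simp
    rw [hzero1, zero_add]
    set CC : ℝ := Real.Gamma (a + a' + a') / (Real.Gamma (a + a') * Real.Gamma a') *
      (Real.Gamma (a + a') / (Real.Gamma a * Real.Gamma a')) with hCC
    have hstep : ∀ x ∈ Set.Ioi u, ENNReal.ofReal (beta2Dens (a + a') a' x) * k x u
        = ENNReal.ofReal (CC * u ^ (a - 1))
          * ENNReal.ofReal ((x - u) ^ (a' - 1) * (1 + x) ^ (-(a + a' + a'))) := by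
      intro x hx
      have hxu : u < x := hx
      have hx0 : (0:ℝ) < x := lt_trans hu hxu
      have h1x : (0:ℝ) < 1 + x := by linarith
      rw [hkdef]
      simp only
      rw [beta2Dens, if_pos hx0, beta1Dens, if_pos ⟨by positivity,
        by rw [← div_eq_inv_mul, div_lt_one hx0]; exact hxu⟩]
      rw [← ENNReal.ofReal_mul (by positivity), ← ENNReal.ofReal_mul (by positivity),
        ← ENNReal.ofReal_mul (by positivity)]
      congr 1
      have e1 : (x⁻¹ * u) ^ (a - 1) = x ^ (-(a-1)) * u ^ (a - 1) := by
        rw [Real.mul_rpow (by positivity) hu.le, ← Real.rpow_neg_one x,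
          ← Real.rpow_mul hx0.le]
        norm_num
      have e2 : (1 - x⁻¹ * u) ^ (a' - 1) = (x - u) ^ (a' - 1) * x ^ (-(a'-1)) := by
        rw [show (1:ℝ) - x⁻¹ * u = (x - u) / x by field_simp,
          Real.div_rpow (by linarith) hx0.le, Real.rpow_neg hx0.le, div_eq_mul_inv]
      rw [e1, e2]
      have e3 : x ^ (a + a' - 1) * x⁻¹ * x ^ (-(a-1)) * x ^ (-(a'-1)) = 1 := by
        rw [← Real.rpow_neg_one x, ← Real.rpow_add hx0, ← Real.rpow_add hx0,
          ← Real.rpow_add hx0, show a + a' - 1 + -1 + -(a-1) + -(a'-1) = 0 by ring,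
          Real.rpow_zero]
      calc Real.Gamma (a + a' + a') / (Real.Gamma (a + a') * Real.Gamma a') * x ^ (a + a' - 1) *
            (1 + x) ^ (-(a + a' + a')) *
            (x⁻¹ * (Real.Gamma (a + a') / (Real.Gamma a * Real.Gamma a') *
              (x ^ (-(a-1)) * u ^ (a - 1)) * ((x - u) ^ (a' - 1) * x ^ (-(a'-1)))))
          = (CC * u ^ (a - 1)) * ((x - u) ^ (a' - 1) * (1 + x) ^ (-(a + a' + a')))
            * (x ^ (a + a' - 1) * x⁻¹ * x ^ (-(a-1)) * x ^ (-(a'-1))) := by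
            rw [hCC]; ring
        _ = (CC * u ^ (a - 1)) * ((x - u) ^ (a' - 1) * (1 + x) ^ (-(a + a' + a'))) := by
            rw [e3, mul_one]
    rw [setLIntegral_congr_fun measurableSet_Ioi hstep,
      lintegral_const_mul' _ _ ENNReal.ofReal_ne_top, translate_lintegral]
    have hshift : ∀ t : ℝ, (u + t - u) ^ (a' - 1) * (1 + (u + t)) ^ (-(a + a' + a'))
        = t ^ (a' - 1) * ((1 + u) + t) ^ (-(a' + (a + a'))) := by
      intro t
      rw [show u + t - u = t by ring, show (1:ℝ) + (u + t) = (1 + u) + t by ring,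
        show -(a + a' + a') = -(a' + (a + a')) by ring]
    simp only [hshift]
    rw [K2 ha' (by linarith : (0:ℝ) < a + a') (by linarith : (0:ℝ) < 1 + u),
      ← ENNReal.ofReal_mul (by positivity)]
    rw [beta2Dens, if_pos hu]
    congr 1
    rw [hCC, show a' + (a + a') = a + a' + a' by ring]
    have g1 := hGpos a ha
    have g2 := hGpos a' ha'
    have g3 := hGpos (a + a') (by linarith)
    have g4 := hGpos (a + a' + a') (by linarith)
    field_simp

theorem scale_lintegral {c : ℝ} (hc : 0 < c) (G : ℝ → ℝ≥0∞) :
    ∫⁻ x in Set.Ioi 0, G x = ∫⁻ t in Set.Ioi 0, ENNReal.ofReal c * G (c * t) := by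
  have himg : (fun t : ℝ => c * t) '' (Set.Ioi 0) = Set.Ioi 0 := by
    ext x
    simp only [Set.mem_image, Set.mem_Ioi]
    constructor
    · rintro ⟨t, ht, rfl⟩; positivity
    · intro hx; exact ⟨x / c, by positivity, by field_simp⟩
  have hder : ∀ t ∈ Set.Ioi (0:ℝ),
      HasDerivWithinAt (fun t : ℝ => c * t) (c * 1) (Set.Ioi 0) t := fun t _ => by
    simpa using ((hasDerivAt_id t).const_mul c).hasDerivWithinAt
  conv_lhs => rw [← himg]
  rw [lintegral_image_1d measurableSet_Ioi hder ((mul_right_injective₀ hc.ne').injOn) G]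
  refine setLIntegral_congr_fun measurableSet_Ioi (fun t _ => ?_)
  rw [mul_one, abs_of_pos hc]

theorem L2 {a a' : ℝ} (ha : 0 < a) (ha' : 0 < a') :
    ((beta2 a a').prod (beta2 (a + a') a)).map (fun p : ℝ × ℝ => (1 + p.1)⁻¹ * p.2)
      = beta2 a' a := by
  set k : ℝ → ℝ → ℝ≥0∞ := fun x u => ENNReal.ofReal ((1 + x)⁻¹)⁻¹ *
    ENNReal.ofReal (beta2Dens (a + a') a (((1 + x)⁻¹)⁻¹ * u)) with hkdef
  have hk : Measurable (uncurry k) := by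
    refine Measurable.mul (f := fun p : ℝ × ℝ => ENNReal.ofReal ((1 + p.1)⁻¹)⁻¹)
      (g := fun p : ℝ × ℝ => ENNReal.ofReal (beta2Dens (a + a') a (((1 + p.1)⁻¹)⁻¹ * p.2))) ?_ ?_
    · exact ((measurable_const.add measurable_fst).inv.inv).ennreal_ofReal
    · exact ((measurable_beta2Dens _ _).comp
        (((measurable_const.add measurable_fst).inv.inv).mul measurable_snd)).ennreal_ofReal
  have hae : ∀ᵐ x ∂(beta2 a a'), (beta2 (a + a') a).map (fun y => (1 + x)⁻¹ * y)
      = volume.withDensity (k x) := by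
    filter_upwards [beta2_ae_pos a a'] with x hx
    have hc : (0:ℝ) < (1 + x)⁻¹ := by positivity
    rw [beta2, map_const_mul_withDensity hc]
  have hmain := mix_lemma (m := fun x y => (1 + x)⁻¹ * y)
    ((measurable_const.add measurable_fst).inv.mul measurable_snd) hk hae
  rw [hmain]
  rw [show beta2 a' a = volume.withDensity fun u => ENNReal.ofReal (beta2Dens a' a u) from rfl]
  congr 1
  funext u
  have hdm : Measurable fun x => ENNReal.ofReal (beta2Dens a a' x) :=
    (measurable_beta2Dens _ _).ennreal_ofReal
  have hkm : Measurable fun x => k x u := hk.of_uncurry_right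
  rw [show beta2 a a' = volume.withDensity fun x => ENNReal.ofReal (beta2Dens a a' x) from rfl,
    lintegral_withDensity_eq_lintegral_mul volume hdm hkm]
  simp only [Pi.mul_apply]
  have hsupp : ∀ x ≤ (0:ℝ), ENNReal.ofReal (beta2Dens a a' x) * k x u = 0 := by
    intro x hx
    rw [beta2Dens, if_neg (not_lt.2 hx)]
    simp
  rw [lintegral_Ioi_of_support hsupp]
  rcases le_or_gt u 0 with hu | hu
  · rw [setLIntegral_congr_fun measurableSet_Ioi (fun x hx => ?_),
      lintegral_zero, beta2Dens, if_neg (not_lt.2 hu), ENNReal.ofReal_zero]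
    have hx0 : (0:ℝ) < x := hx
    rw [hkdef]
    simp only
    have hinner : beta2Dens (a + a') a ((1 + x)⁻¹⁻¹ * u) = 0 := by
      rw [beta2Dens, if_neg (by
        intro h1
        have h2 : ((1 + x)⁻¹)⁻¹ * u ≤ 0 :=
          mul_nonpos_of_nonneg_of_nonpos (by positivity) hu
        linarith)]
    rw [hinner]
    simp
  · have hGpos : ∀ r : ℝ, 0 < r → Real.Gamma r ≠ 0 := fun r hr => (Real.Gamma_pos_of_pos hr).ne'
    set CC : ℝ := Real.Gamma (a + a') / (Real.Gamma a * Real.Gamma a') *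
      (Real.Gamma (a + a' + a) / (Real.Gamma (a + a') * Real.Gamma a)) with hCC
    have hstep : ∀ x ∈ Set.Ioi (0:ℝ), ENNReal.ofReal (beta2Dens a a' x) * k x u
        = ENNReal.ofReal (CC * u ^ (a + a' - 1))
          * ENNReal.ofReal (x ^ (a - 1) * ((1 + u) + u * x) ^ (-(a + (a + a')))) := by
      intro x hx
      have hx0 : (0:ℝ) < x := hx
      have h1x : (0:ℝ) < 1 + x := by linarith
      have hiu : ((1 + x)⁻¹)⁻¹ = 1 + x := inv_inv _
      rw [hkdef]
      simp only
      simp only [hiu, beta2Dens]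
      rw [if_pos hx0, if_pos (by positivity : (0:ℝ) < (1 + x) * u)]
      rw [← ENNReal.ofReal_mul (by positivity), ← ENNReal.ofReal_mul (by positivity),
        ← ENNReal.ofReal_mul (by positivity)]
      congr 1
      have e1 : ((1 + x) * u) ^ (a + a' - 1)
          = (1 + x) ^ (a + a' - 1) * u ^ (a + a' - 1) :=
        Real.mul_rpow h1x.le hu.le
      have e2 : (1 + (1 + x) * u) ^ (-(a + a' + a)) = ((1 + u) + u * x) ^ (-(a + (a + a'))) := by
        rw [show (1:ℝ) + (1 + x) * u = (1 + u) + u * x by ring,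
          show -(a + a' + a) = -(a + (a + a')) by ring]
      rw [e1, e2]
      have e3 : (1 + x) ^ (-(a + a')) * (1 + x) * (1 + x) ^ (a + a' - 1) = 1 := by
        rw [show ((1:ℝ) + x) ^ (-(a + a')) * (1 + x) * (1 + x) ^ (a + a' - 1)
            = (1 + x) ^ (-(a + a')) * (1 + x) ^ ((1:ℝ)) * (1 + x) ^ (a + a' - 1) by
          rw [Real.rpow_one],
          ← Real.rpow_add h1x, ← Real.rpow_add h1x,
          show -(a + a') + 1 + (a + a' - 1) = 0 by ring, Real.rpow_zero]
      calc Real.Gamma (a + a') / (Real.Gamma a * Real.Gamma a') * x ^ (a - 1) *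
            (1 + x) ^ (-(a + a')) * ((1 + x) * (Real.Gamma (a + a' + a) /
              (Real.Gamma (a + a') * Real.Gamma a) *
              ((1 + x) ^ (a + a' - 1) * u ^ (a + a' - 1)) *
              ((1 + u) + u * x) ^ (-(a + (a + a')))))
          = (CC * u ^ (a + a' - 1)) * (x ^ (a - 1) * ((1 + u) + u * x) ^ (-(a + (a + a'))))
            * ((1 + x) ^ (-(a + a')) * (1 + x) * (1 + x) ^ (a + a' - 1)) := by
            rw [hCC]; ring
        _ = (CC * u ^ (a + a' - 1)) * (x ^ (a - 1) * ((1 + u) + u * x) ^ (-(a + (a + a')))) := by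
            rw [e3, mul_one]
    rw [setLIntegral_congr_fun measurableSet_Ioi hstep,
      lintegral_const_mul' _ _ ENNReal.ofReal_ne_top,
      scale_lintegral (inv_pos.2 hu) _]
    have hscale : ∀ t ∈ Set.Ioi (0:ℝ), ENNReal.ofReal u⁻¹ *
        ENNReal.ofReal ((u⁻¹ * t) ^ (a - 1) * ((1 + u) + u * (u⁻¹ * t)) ^ (-(a + (a + a'))))
        = ENNReal.ofReal (u⁻¹ * u ^ (-(a - 1)))
          * ENNReal.ofReal (t ^ (a - 1) * ((1 + u) + t) ^ (-(a + (a + a')))) := by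
      intro t ht
      have ht0 : (0:ℝ) < t := ht
      rw [show (1:ℝ) + u + u * (u⁻¹ * t) = (1 + u) + t by field_simp,
        Real.mul_rpow (by positivity) ht0.le,
        show (u⁻¹ : ℝ) ^ (a - 1) = u ^ (-(a - 1)) by
          rw [← Real.rpow_neg_one u, ← Real.rpow_mul hu.le]; norm_num,
        ← ENNReal.ofReal_mul (by positivity), ← ENNReal.ofReal_mul (by positivity)]
      ring_nf
    rw [setLIntegral_congr_fun measurableSet_Ioi hscale,
      lintegral_const_mul' _ _ ENNReal.ofReal_ne_top,
      K2 ha (by linarith : (0:ℝ) < a + a') (by linarith : (0:ℝ) < 1 + u)]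
    rw [beta2Dens, if_pos hu]
    have hg1 : (0:ℝ) < Real.Gamma a := Real.Gamma_pos_of_pos ha
    have hg2 : (0:ℝ) < Real.Gamma a' := Real.Gamma_pos_of_pos ha'
    have hg3 : (0:ℝ) < Real.Gamma (a + a') := Real.Gamma_pos_of_pos (by linarith)
    have hg4 : (0:ℝ) < Real.Gamma (a + (a + a')) := Real.Gamma_pos_of_pos (by linarith)
    rw [← ENNReal.ofReal_mul (by positivity), ← ENNReal.ofReal_mul (by positivity)]
    congr 1
    have hupow : u ^ (a + a' - 1) * (u⁻¹ * u ^ (-(a - 1))) = u ^ (a' - 1) := by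
      rw [← Real.rpow_neg_one u, ← Real.rpow_add hu, ← Real.rpow_add hu,
        show a + a' - 1 + (-1 + -(a - 1)) = a' - 1 by ring]
    rw [show -(a' + a) = -(a + a') by ring, show Real.Gamma (a' + a) = Real.Gamma (a + a') by rw [add_comm]]
    calc CC * u ^ (a + a' - 1) *
          (u⁻¹ * u ^ (-(a - 1)) *
            ((1 + u) ^ (-(a + a')) * (Real.Gamma a * Real.Gamma (a + a') /
              Real.Gamma (a + (a + a')))))
        = (CC * (Real.Gamma a * Real.Gamma (a + a') / Real.Gamma (a + (a + a')))) *
            (u ^ (a + a' - 1) * (u⁻¹ * u ^ (-(a - 1)))) * (1 + u) ^ (-(a + a')) := by ring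
      _ = Real.Gamma (a + a') / (Real.Gamma a' * Real.Gamma a) * u ^ (a' - 1) *
            (1 + u) ^ (-(a + a')) := by
          rw [hupow]
          congr 1
          rw [hCC, show a + (a + a') = a + a' + a by ring]
          field_simp

theorem beta_prop_two {Ω : Type*} [MeasurableSpace Ω] (μ : Measure Ω)
    [IsProbabilityMeasure μ] (W X W' : Ω → ℝ)
    (hW : Measurable W) (hX : Measurable X) (hW' : Measurable W')
    (a a' : ℝ) (ha : 0 < a) (ha' : 0 < a')
    (hInd : iIndepFun (m := fun _ : Fin 3 => (inferInstance : MeasurableSpace ℝ)) ![W, X, W'] μ)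
    (hWlaw : μ.map W = beta2 (a + a') a) (hXlaw : μ.map X = beta1 a a')
    (hW'law : μ.map W' = beta2 (a + a') a') :
    μ.map (fun ω => 1 / (1 + W ω / (1 + W' ω * X ω))) = μ.map X := by
  have hmeas : ∀ i, Measurable (![W, X, W'] i) := by
    intro i
    fin_cases i
    · exact hW
    · exact hX
    · exact hW'
  set S : Ω → ℝ := fun ω => W' ω * X ω with hSdef
  have hSmeas : Measurable S := hW'.mul hX
  -- law of S
  have hIndWX : IndepFun W' X μ := by
    simpa using hInd.indepFun (show (2 : Fin 3) ≠ 1 by decide)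
  have hpair1 : μ.map (fun ω => (W' ω, X ω)) = (μ.map W').prod (μ.map X) :=
    (indepFun_iff_map_prod_eq_prod_map_map hW'.aemeasurable hX.aemeasurable).1 hIndWX
  have hS : μ.map S = beta2 a a' := by
    have hcomp : S = (fun p : ℝ × ℝ => p.1 * p.2) ∘ (fun ω => (W' ω, X ω)) := rfl
    rw [hcomp, ← Measure.map_map (g := fun p : ℝ × ℝ => p.1 * p.2) (measurable_fst.mul measurable_snd) (hW'.prodMk hX),
      hpair1, hW'law, hXlaw, L1 ha ha']
  -- independence of S and W
  have hpairInd : IndepFun (fun ω => (X ω, W' ω)) W μ := by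
    have := hInd.indepFun_prodMk hmeas 1 2 0 (by decide) (by decide)
    simpa using this
  have hSW : IndepFun S W μ := by
    have := hpairInd.comp (φ := fun p : ℝ × ℝ => p.2 * p.1) (ψ := id)
      (measurable_snd.mul measurable_fst) measurable_id
    exact this
  have hpair2 : μ.map (fun ω => (S ω, W ω)) = (μ.map S).prod (μ.map W) :=
    (indepFun_iff_map_prod_eq_prod_map_map hSmeas.aemeasurable hW.aemeasurable).1 hSW
  -- law of T
  set T : Ω → ℝ := fun ω => (1 + S ω)⁻¹ * W ω with hTdef
  have hT : μ.map T = beta2 a' a := by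
    have hcomp : T = (fun p : ℝ × ℝ => (1 + p.1)⁻¹ * p.2) ∘ (fun ω => (S ω, W ω)) := rfl
    rw [hcomp, ← Measure.map_map (g := fun p : ℝ × ℝ => (1 + p.1)⁻¹ * p.2) ((measurable_const.add measurable_fst).inv.mul measurable_snd)
      (hSmeas.prodMk hW), hpair2, hS, hWlaw, L2 ha ha']
  -- final
  have hfinal : (fun ω => 1 / (1 + W ω / (1 + W' ω * X ω)))
      = (fun y => 1 / (1 + y)) ∘ T := by
    funext ω
    simp only [Function.comp_apply, hTdef, hSdef, div_eq_mul_inv, mul_comm]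
  have hTmeas : Measurable T := ((measurable_const.add hSmeas).inv).mul hW
  rw [hfinal, ← Measure.map_map (show Measurable fun y : ℝ => 1 / (1 + y) by fun_prop) hTmeas,
    hT, L3 ha ha', hXlaw]
end

section
/- Let a, a', b > 0 and let X be a random variable with the real beta-hypergeometric distribution μ_{a,a',b}. Then for all real t with t + a > 0, E(X^t) = (Γ(a+b)/Γ(a))·(Γ(t+a)/Γ(t+a+b))·₃F₂(a,b,a+t;a+a',t+a+b;1)/₃F₂(a,a,b;a+b,a+a';1). -/
open MeasureTheory ProbabilityTheory Real Set Filter Topology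

section BhAux

lemma poch_zero' (a : ℝ) : poch a 0 = 1 := by simp [poch]
lemma poch_succ' (a : ℝ) (n : ℕ) : poch a (n+1) = poch a n * (a + n) :=
  Finset.prod_range_succ _ _
lemma poch_pos' {a : ℝ} (ha : 0 < a) (n : ℕ) : 0 < poch a n := by
  apply Finset.prod_pos; intro i _; positivity

lemma Gamma_add_nat' {x : ℝ} (hx : 0 < x) (n : ℕ) :
    Real.Gamma (x + n) = poch x n * Real.Gamma x := by
  induction n with
  | zero => simp [poch_zero']
  | succ n ih =>
    have h : x + (n+1 : ℕ) = (x + n) + 1 := by push_cast; ring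
    rw [h, Real.Gamma_add_one (by positivity), ih, poch_succ']
    ring

/-- term of the `₂F₁` series -/
noncomputable def bhT2 (a b c : ℝ) (n : ℕ) : ℝ :=
  poch a n * poch b n / ((n.factorial : ℝ) * poch c n)

/-- term of the `₃F₂(1)` series -/
noncomputable def bhT3 (a1 a2 a3 b1 b2 : ℝ) (n : ℕ) : ℝ :=
  poch a1 n * poch a2 n * poch a3 n / ((n.factorial : ℝ) * poch b1 n * poch b2 n)

lemma F21_eq (a b c x : ℝ) : F21 a b c x = ∑' n : ℕ, bhT2 a b c n * x ^ n := rfl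
lemma F32one_eq (a1 a2 a3 b1 b2 : ℝ) :
    F32one a1 a2 a3 b1 b2 = ∑' n : ℕ, bhT3 a1 a2 a3 b1 b2 n := rfl

lemma bhT2_pos {a b c : ℝ} (ha : 0 < a) (hb : 0 < b) (hc : 0 < c) (n : ℕ) :
    0 < bhT2 a b c n := by
  have := poch_pos' ha n; have := poch_pos' hb n; have := poch_pos' hc n
  have : (0:ℝ) < n.factorial := by exact_mod_cast n.factorial_pos
  unfold bhT2; positivity

lemma bhT3_pos {a1 a2 a3 b1 b2 : ℝ} (h1 : 0 < a1) (h2 : 0 < a2) (h3 : 0 < a3)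
    (h4 : 0 < b1) (h5 : 0 < b2) (n : ℕ) : 0 < bhT3 a1 a2 a3 b1 b2 n := by
  have := poch_pos' h1 n; have := poch_pos' h2 n; have := poch_pos' h3 n
  have := poch_pos' h4 n; have := poch_pos' h5 n
  have : (0:ℝ) < n.factorial := by exact_mod_cast n.factorial_pos
  unfold bhT3; positivity

lemma bhT3_zero (a1 a2 a3 b1 b2 : ℝ) : bhT3 a1 a2 a3 b1 b2 0 = 1 := by
  simp [bhT3, poch_zero']

lemma bhT3_succ {a1 a2 a3 b1 b2 : ℝ} (h1 : 0 < a1) (h2 : 0 < a2) (h3 : 0 < a3)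
    (h4 : 0 < b1) (h5 : 0 < b2) (n : ℕ) :
    bhT3 a1 a2 a3 b1 b2 (n+1) = bhT3 a1 a2 a3 b1 b2 n *
      ((a1+n) * (a2+n) * (a3+n) / (((n:ℝ)+1) * (b1+n) * (b2+n))) := by
  have e1 := (poch_pos' h1 n).ne'; have e2 := (poch_pos' h2 n).ne'
  have e3 := (poch_pos' h3 n).ne'; have e4 := (poch_pos' h4 n).ne'
  have e5 := (poch_pos' h5 n).ne'
  have e6 : ((n.factorial : ℝ)) ≠ 0 := by exact_mod_cast n.factorial_pos.ne'
  have e7 : (a1:ℝ) + n ≠ 0 := by positivity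
  have e8 : (a2:ℝ) + n ≠ 0 := by positivity
  have e9 : (a3:ℝ) + n ≠ 0 := by positivity
  have e10 : (b1:ℝ) + n ≠ 0 := by positivity
  have e11 : (b2:ℝ) + n ≠ 0 := by positivity
  have e12 : ((n:ℝ) + 1) ≠ 0 := by positivity
  unfold bhT3
  rw [poch_succ', poch_succ', poch_succ', poch_succ', poch_succ', Nat.factorial_succ]
  push_cast
  field_simp

lemma tendsto_bh_ratio (a c : ℝ) (hc : 0 < c) :
    Filter.Tendsto (fun n : ℕ => (a + n)/(c + n)) Filter.atTop (nhds 1) := by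
  have h1 : Filter.Tendsto (fun n : ℕ => (c:ℝ) + n) Filter.atTop Filter.atTop :=
    Filter.tendsto_atTop_add_const_left _ _ tendsto_natCast_atTop_atTop
  have h2 : Filter.Tendsto (fun n : ℕ => (a - c)/((c:ℝ) + n)) Filter.atTop (nhds 0) :=
    Filter.Tendsto.div_atTop tendsto_const_nhds h1
  have h3 : Filter.Tendsto (fun n : ℕ => 1 + (a - c)/((c:ℝ) + n)) Filter.atTop (nhds (1 + 0)) :=
    tendsto_const_nhds.add h2
  rw [add_zero] at h3
  refine h3.congr fun n => ?_
  have hcn : (c:ℝ) + n ≠ 0 := by positivity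
  field_simp
  ring

lemma F21_summable' {a b c : ℝ} (ha : 0 < a) (hb : 0 < b) (hc : 0 < c)
    {x : ℝ} (hx0 : 0 < x) (hx1 : x < 1) :
    Summable (fun n : ℕ => bhT2 a b c n * x ^ n) := by
  set f := fun n : ℕ => bhT2 a b c n * x ^ n with hf
  have hfpos : ∀ n, 0 < f n := fun n => by
    have := bhT2_pos ha hb hc n; positivity
  refine summable_of_ratio_test_tendsto_lt_one hx1
    (Filter.Eventually.of_forall fun n => (hfpos n).ne') ?_
  have hre : ∀ n : ℕ, ‖f (n+1)‖ / ‖f n‖ = ((a+n)/(1+n)) * ((b+n)/(c+n)) * x := by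
    intro n
    rw [Real.norm_of_nonneg (hfpos (n+1)).le, Real.norm_of_nonneg (hfpos n).le, hf]
    simp only
    unfold bhT2
    rw [poch_succ', poch_succ', poch_succ', Nat.factorial_succ, pow_succ]
    have h1 := (poch_pos' ha n).ne'
    have h2 := (poch_pos' hb n).ne'
    have h3 := (poch_pos' hc n).ne'
    have h4 : ((n.factorial : ℝ)) ≠ 0 := by exact_mod_cast n.factorial_pos.ne'
    have h5 : (a:ℝ) + n ≠ 0 := by positivity
    have h6 : (b:ℝ) + n ≠ 0 := by positivity
    have h7 : (c:ℝ) + n ≠ 0 := by positivity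
    have h8 : ((n:ℝ) + 1) ≠ 0 := by positivity
    have h9 : x ≠ 0 := hx0.ne'
    push_cast
    field_simp
    ring
  have htend : Filter.Tendsto (fun n : ℕ => ((a+n)/(1+n)) * ((b+n)/(c+n)) * x) Filter.atTop
      (nhds (1 * 1 * x)) :=
    ((tendsto_bh_ratio a 1 one_pos).mul (tendsto_bh_ratio b c hc)).mul tendsto_const_nhds
  rw [one_mul, one_mul] at htend
  exact htend.congr fun n => (hre n).symm

lemma beta_integral_real {p q : ℝ} (hp : 0 < p) (hq : 0 < q) :
    ∫ x in Ioo (0:ℝ) 1, x ^ (p-1) * (1-x) ^ (q-1) =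
      Real.Gamma p * Real.Gamma q / Real.Gamma (p+q) := by
  have hc : Complex.Gamma p * Complex.Gamma q =
      Complex.Gamma (p+q) * Complex.betaIntegral p q := by
    have := Complex.Gamma_mul_Gamma_eq_betaIntegral
      (s := (p:ℂ)) (t := (q:ℂ)) (by simpa using hp) (by simpa using hq)
    simpa using this
  have hint : Complex.betaIntegral p q =
      ((∫ x in (0:ℝ)..1, x ^ (p-1) * (1-x) ^ (q-1) : ℝ) : ℂ) := by
    rw [Complex.betaIntegral, ← intervalIntegral.integral_ofReal]
    refine intervalIntegral.integral_congr fun x hx => ?_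
    rw [uIcc_of_le zero_le_one] at hx
    rw [Complex.ofReal_mul, Complex.ofReal_cpow hx.1,
      Complex.ofReal_cpow (by linarith [hx.2] : (0:ℝ) ≤ 1 - x)]
    push_cast
    ring
  have hG : Complex.Gamma ((p:ℂ)+q) = ((Real.Gamma (p+q) : ℝ) : ℂ) := by
    rw [← Complex.ofReal_add, Complex.Gamma_ofReal]
  have hGp : Complex.Gamma (p:ℂ) = ((Real.Gamma p : ℝ) : ℂ) := Complex.Gamma_ofReal p
  have hGq : Complex.Gamma (q:ℂ) = ((Real.Gamma q : ℝ) : ℂ) := Complex.Gamma_ofReal q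
  rw [hint, hG, hGp, hGq, ← Complex.ofReal_mul, ← Complex.ofReal_mul] at hc
  have hreal : Real.Gamma p * Real.Gamma q =
      Real.Gamma (p+q) * ∫ x in (0:ℝ)..1, x ^ (p-1) * (1-x) ^ (q-1) := by
    exact_mod_cast hc
  have hGpq : Real.Gamma (p+q) ≠ 0 := (Real.Gamma_pos_of_pos (by positivity)).ne'
  rw [intervalIntegral.integral_of_le zero_le_one, ← integral_Ioc_eq_integral_Ioo] at *
  field_simp at hreal ⊢
  linarith [hreal]

lemma beta_integrable {p q : ℝ} (hp : 0 < p) (hq : 0 < q) :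
    IntegrableOn (fun x : ℝ => x ^ (p-1) * (1-x) ^ (q-1)) (Ioo (0:ℝ) 1) := by
  have h := (Complex.betaIntegral_convergent (u := (p:ℂ)) (v := (q:ℂ))
    (by simpa using hp) (by simpa using hq))
  rw [intervalIntegrable_iff, uIoc_of_le zero_le_one] at h
  have h2 := h.norm
  have h3 : IntegrableOn
      (fun x : ℝ => ‖(x:ℂ) ^ ((p:ℂ)-1) * (1-(x:ℂ)) ^ ((q:ℂ)-1)‖) (Ioo (0:ℝ) 1) :=
    IntegrableOn.mono_set h2 Ioo_subset_Ioc_self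
  refine h3.congr_fun (fun x hx => ?_) measurableSet_Ioo
  beta_reduce
  rw [norm_mul]
  have h1x : (0:ℝ) < 1 - x := by linarith [hx.2]
  rw [show ((p:ℂ)-1) = ((p-1 : ℝ) : ℂ) by push_cast; ring,
      show ((q:ℂ)-1) = ((q-1 : ℝ) : ℂ) by push_cast; ring,
      show (1 - (x:ℂ)) = ((1 - x : ℝ) : ℂ) by push_cast; ring]
  rw [Complex.norm_cpow_eq_rpow_re_of_pos hx.1, Complex.norm_cpow_eq_rpow_re_of_pos h1x]
  simp

lemma beta_lintegral {p q : ℝ} (hp : 0 < p) (hq : 0 < q) :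
    ∫⁻ x in Ioo (0:ℝ) 1, ENNReal.ofReal (x ^ (p-1) * (1-x) ^ (q-1)) =
      ENNReal.ofReal (Real.Gamma p * Real.Gamma q / Real.Gamma (p+q)) := by
  rw [← beta_integral_real hp hq]
  rw [← ofReal_integral_eq_lintegral_ofReal (beta_integrable hp hq)]
  filter_upwards [ae_restrict_mem measurableSet_Ioo] with x hx
  have h1x : (0:ℝ) < 1 - x := by linarith [hx.2]
  have := Real.rpow_nonneg hx.1.le (p-1)
  have := Real.rpow_nonneg h1x.le (q-1)
  positivity

end BhAux

section BhAux2

lemma Cbh_nonneg {a a' b : ℝ} (ha : 0 < a) (ha' : 0 < a') (hb : 0 < b) :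
    0 ≤ Cbh a a' b := by
  have h1 : 0 ≤ F32one a a b (a+b) (a+a') := by
    rw [F32one_eq]
    exact tsum_nonneg fun n => (bhT3_pos ha ha hb (by positivity) (by positivity) n).le
  have h2 := Real.Gamma_pos_of_pos ha
  have h3 := Real.Gamma_pos_of_pos hb
  have h4 := Real.Gamma_pos_of_pos (show (0:ℝ) < a + b by positivity)
  unfold Cbh
  positivity

lemma measurable_ofReal_bhDens {a a' b : ℝ} (ha : 0 < a) (ha' : 0 < a') (hb : 0 < b) :
    Measurable fun x => ENNReal.ofReal (bhDens a a' b x) := by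
  have hkey : (fun x => ENNReal.ofReal (bhDens a a' b x)) =
      (Ioo (0:ℝ) 1).indicator (fun x =>
        ENNReal.ofReal (Cbh a a' b * x ^ (a-1) * (1-x) ^ (b-1)) *
          ∑' n : ℕ, ENNReal.ofReal (bhT2 a b (a+a') n * x ^ n)) := by
    funext x
    by_cases hx : x ∈ Ioo (0:ℝ) 1
    · rw [Set.indicator_of_mem hx, bhDens, if_pos (by exact ⟨hx.1, hx.2⟩), F21_eq]
      have hsum := F21_summable' ha hb (show (0:ℝ) < a + a' by positivity) hx.1 hx.2
      have hnn : ∀ n : ℕ, 0 ≤ bhT2 a b (a+a') n * x ^ n := fun n => by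
        have := bhT2_pos ha hb (show (0:ℝ) < a + a' by positivity) n
        have := hx.1
        positivity
      have hnonneg : 0 ≤ Cbh a a' b * x ^ (a-1) * (1-x) ^ (b-1) := by
        have h1 := Cbh_nonneg ha ha' hb
        have h2 := Real.rpow_nonneg hx.1.le (a-1)
        have h3 := Real.rpow_nonneg (show (0:ℝ) ≤ 1 - x by linarith [hx.2]) (b-1)
        positivity
      rw [← ENNReal.ofReal_tsum_of_nonneg hnn hsum, ← ENNReal.ofReal_mul hnonneg]
    · rw [Set.indicator_of_notMem hx, bhDens,
        if_neg (by simpa [Set.mem_Ioo] using hx), ENNReal.ofReal_zero]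
  rw [hkey]
  apply Measurable.indicator _ measurableSet_Ioo
  apply Measurable.mul
  · fun_prop
  · apply Measurable.ennreal_tsum
    intro n
    fun_prop

lemma bh_lintegral_rpow {a a' b : ℝ} (ha : 0 < a) (ha' : 0 < a') (hb : 0 < b)
    (t : ℝ) (ht : 0 < t + a) :
    ∫⁻ x, ENNReal.ofReal (x ^ t) ∂(bhMeasure a a' b) =
      ENNReal.ofReal (Cbh a a' b * Real.Gamma b * (Real.Gamma (t+a) / Real.Gamma (t+a+b))) *
        ∑' n : ℕ, ENNReal.ofReal (bhT3 a b (a+t) (a+a') (t+a+b) n) := by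
  have haa' : (0:ℝ) < a + a' := by positivity
  have hC := Cbh_nonneg ha ha' hb
  rw [bhMeasure, lintegral_withDensity_eq_lintegral_mul _ (measurable_ofReal_bhDens ha ha' hb)
    (by fun_prop)]
  have hsupp : Function.support
      (fun x : ℝ => ENNReal.ofReal (bhDens a a' b x) * ENNReal.ofReal (x ^ t)) ⊆
      Ioo (0:ℝ) 1 := by
    intro x hx
    by_contra hxm
    apply hx
    simp only [Pi.mul_apply]
    rw [bhDens, if_neg (by simpa [Set.mem_Ioo] using hxm), ENNReal.ofReal_zero, zero_mul]
  simp only [Pi.mul_apply]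
  rw [← setLIntegral_eq_of_support_subset hsupp]
  -- pointwise rewrite on Ioo
  have hptw : ∀ x ∈ Ioo (0:ℝ) 1,
      (fun x : ℝ => ENNReal.ofReal (bhDens a a' b x) * ENNReal.ofReal (x ^ t)) x =
      ∑' n : ℕ, (ENNReal.ofReal (Cbh a a' b * bhT2 a b (a+a') n) *
        ENNReal.ofReal (x ^ (t+a+(n:ℝ)-1) * (1-x) ^ (b-1))) := by
    intro x hx
    have hx0 := hx.1
    have hx1 := hx.2
    have h1x : (0:ℝ) < 1 - x := by linarith
    have hsum := F21_summable' ha hb haa' hx0 hx1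
    have hterm : ∀ n : ℕ,
        (Cbh a a' b * bhT2 a b (a+a') n) * (x ^ (t+a+(n:ℝ)-1) * (1-x) ^ (b-1)) =
        (x ^ t * (Cbh a a' b * x ^ (a-1) * (1-x) ^ (b-1))) * (bhT2 a b (a+a') n * x ^ n) := by
      intro n
      have hxpow : x ^ (t+a+(n:ℝ)-1) = x ^ t * x ^ (a-1) * x ^ n := by
        rw [← Real.rpow_natCast x n, ← Real.rpow_add hx0, ← Real.rpow_add hx0]
        congr 1; ring
      rw [hxpow]; ring
    have hreal : bhDens a a' b x * x ^ t =
        ∑' n : ℕ, (Cbh a a' b * bhT2 a b (a+a') n) *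
          (x ^ (t+a+(n:ℝ)-1) * (1-x) ^ (b-1)) := by
      rw [bhDens, if_pos (show 0 < x ∧ x < 1 from ⟨hx0, hx1⟩), F21_eq,
        tsum_congr hterm, tsum_mul_left]
      ring
    have hnn : ∀ n : ℕ, 0 ≤ (Cbh a a' b * bhT2 a b (a+a') n) *
        (x ^ (t+a+(n:ℝ)-1) * (1-x) ^ (b-1)) := fun n => by
      have := bhT2_pos ha hb haa' n
      have := Real.rpow_nonneg hx0.le (t+a+(n:ℝ)-1)
      have := Real.rpow_nonneg h1x.le (b-1)
      positivity
    have hsum2 : Summable (fun n : ℕ => (Cbh a a' b * bhT2 a b (a+a') n) *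
        (x ^ (t+a+(n:ℝ)-1) * (1-x) ^ (b-1))) := by
      refine ((hsum.mul_left (x ^ t * (Cbh a a' b * x ^ (a-1) * (1-x) ^ (b-1)))).congr
        fun n => ?_)
      rw [hterm n]
    have hdnn : 0 ≤ bhDens a a' b x := by
      rw [bhDens, if_pos (show 0 < x ∧ x < 1 from ⟨hx0, hx1⟩)]
      have h2 := Real.rpow_nonneg hx0.le (a-1)
      have h3 := Real.rpow_nonneg h1x.le (b-1)
      have h4 : 0 ≤ F21 a b (a+a') x := by
        rw [F21_eq]
        exact tsum_nonneg fun n => by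
          have := bhT2_pos ha hb haa' n
          positivity
      have h5 := Cbh_nonneg ha ha' hb
      positivity
    simp only
    rw [← ENNReal.ofReal_mul hdnn]
    rw [hreal, ENNReal.ofReal_tsum_of_nonneg hnn hsum2]
    refine tsum_congr fun n => ?_
    rw [ENNReal.ofReal_mul (by
      have := bhT2_pos ha hb haa' n
      positivity)]
  rw [setLIntegral_congr_fun measurableSet_Ioo hptw]
  rw [lintegral_tsum (fun n => by fun_prop)]
  have hbeta : ∀ n : ℕ,
      ∫⁻ x in Ioo (0:ℝ) 1, (ENNReal.ofReal (Cbh a a' b * bhT2 a b (a+a') n) *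
        ENNReal.ofReal (x ^ (t+a+(n:ℝ)-1) * (1-x) ^ (b-1))) =
      ENNReal.ofReal (Cbh a a' b * bhT2 a b (a+a') n) *
        ENNReal.ofReal (Real.Gamma (t+a+(n:ℝ)) * Real.Gamma b / Real.Gamma (t+a+(n:ℝ)+b)) := by
    intro n
    rw [lintegral_const_mul _ (by fun_prop)]
    congr 1
    have hp : (0:ℝ) < t+a+(n:ℝ) := by positivity
    have := beta_lintegral hp hb
    rw [show t+a+(n:ℝ)-1 = (t+a+(n:ℝ))-1 by ring]
    exact this
  rw [tsum_congr hbeta]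
  have hkey : ∀ n : ℕ,
      ENNReal.ofReal (Cbh a a' b * bhT2 a b (a+a') n) *
        ENNReal.ofReal (Real.Gamma (t+a+(n:ℝ)) * Real.Gamma b / Real.Gamma (t+a+(n:ℝ)+b)) =
      ENNReal.ofReal (Cbh a a' b * Real.Gamma b * (Real.Gamma (t+a) / Real.Gamma (t+a+b))) *
        ENNReal.ofReal (bhT3 a b (a+t) (a+a') (t+a+b) n) := by
    intro n
    rw [← ENNReal.ofReal_mul (by have := bhT2_pos ha hb haa' n; positivity),
        ← ENNReal.ofReal_mul (by
          have h2 := Real.Gamma_pos_of_pos hb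
          have h3 := Real.Gamma_pos_of_pos ht
          have h4 := Real.Gamma_pos_of_pos (show (0:ℝ) < t+a+b by positivity)
          positivity)]
    congr 1
    have hG1 : Real.Gamma (t+a+(n:ℝ)) = poch (t+a) n * Real.Gamma (t+a) :=
      Gamma_add_nat' ht n
    have hG2 : Real.Gamma (t+a+(n:ℝ)+b) = poch (t+a+b) n * Real.Gamma (t+a+b) := by
      rw [show t+a+(n:ℝ)+b = (t+a+b)+(n:ℝ) by ring]
      exact Gamma_add_nat' (by positivity) n
    have hpoch : poch (a+t) n = poch (t+a) n := by rw [add_comm]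
    unfold bhT2 bhT3
    rw [hG1, hG2, hpoch]
    have e1 := (poch_pos' ha n).ne'
    have e2 := (poch_pos' hb n).ne'
    have e3 := (poch_pos' haa' n).ne'
    have e4 := (poch_pos' ht n).ne'
    have e5 := (poch_pos' (show (0:ℝ) < t+a+b by positivity) n).ne'
    have e6 : ((n.factorial : ℝ)) ≠ 0 := by exact_mod_cast n.factorial_pos.ne'
    have e7 := (Real.Gamma_pos_of_pos hb).ne'
    have e8 := (Real.Gamma_pos_of_pos ht).ne'
    have e9 := (Real.Gamma_pos_of_pos (show (0:ℝ) < t+a+b by positivity)).ne'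
    field_simp
  rw [tsum_congr hkey, ENNReal.tsum_mul_left]

end BhAux2


theorem bh_mellin {Ω : Type*} [MeasurableSpace Ω] (μ : Measure Ω)
    [IsProbabilityMeasure μ] (X : Ω → ℝ) (hX : Measurable X)
    (a a' b : ℝ) (ha : 0 < a) (ha' : 0 < a') (hb : 0 < b)
    (hXlaw : μ.map X = bhMeasure a a' b)
    (t : ℝ) (ht : 0 < t + a) :
    ∫ ω, X ω ^ t ∂μ =
      Real.Gamma (a + b) / Real.Gamma a * (Real.Gamma (t + a) / Real.Gamma (t + a + b)) *
        (F32one a b (a + t) (a + a') (t + a + b) / F32one a a b (a + b) (a + a')) := by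
  have haa' : (0:ℝ) < a + a' := by positivity
  have htab : (0:ℝ) < t + a + b := by positivity
  have hGb := Real.Gamma_pos_of_pos hb
  have hGa := Real.Gamma_pos_of_pos ha
  have hGab := Real.Gamma_pos_of_pos (show (0:ℝ) < a+b by positivity)
  have hGta := Real.Gamma_pos_of_pos ht
  have hGtab := Real.Gamma_pos_of_pos htab
  have hmass : bhMeasure a a' b Set.univ = 1 := by
    rw [← hXlaw, Measure.map_apply hX MeasurableSet.univ]
    simp
  have hden_sum : Summable (bhT3 a a b (a+b) (a+a')) := by
    by_contra h
    have hF0 : F32one a a b (a+b) (a+a') = 0 := by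
      rw [F32one_eq]; exact tsum_eq_zero_of_not_summable h
    have hC0 : Cbh a a' b = 0 := by unfold Cbh; rw [hF0]; simp
    have hd0 : ∀ x, bhDens a a' b x = 0 := by
      intro x; unfold bhDens; rw [hC0]; simp
    have hz : bhMeasure a a' b = 0 := by
      unfold bhMeasure; simp [hd0]
    rw [hz] at hmass; simp at hmass
  have hden_nonneg : ∀ n, 0 ≤ bhT3 a a b (a+b) (a+a') n := fun n =>
    (bhT3_pos ha ha hb (by positivity) haa' n).le
  have hF32den_pos : 0 < F32one a a b (a+b) (a+a') := by
    rw [F32one_eq]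
    have h1 := Summable.le_tsum hden_sum 0 (fun i _ => hden_nonneg i)
    rw [bhT3_zero] at h1
    linarith
  have hCpos : 0 < Cbh a a' b := by
    rw [F32one_eq] at hF32den_pos
    unfold Cbh
    rw [F32one_eq]
    positivity
  have hKpos : 0 < Cbh a a' b * Real.Gamma b * (Real.Gamma (t+a) / Real.Gamma (t+a+b)) := by
    positivity
  have hL := bh_lintegral_rpow ha ha' hb t ht
  have haec : bhMeasure a a' b (Ioo (0:ℝ) 1)ᶜ = 0 := by
    unfold bhMeasure
    rw [withDensity_apply _ measurableSet_Ioo.compl]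
    have hz : ∀ x ∈ (Ioo (0:ℝ) 1)ᶜ, ENNReal.ofReal (bhDens a a' b x) = (0:ENNReal) := by
      intro x hx
      rw [bhDens, if_neg (by simpa [mem_Ioo] using hx)]
      simp
    rw [setLIntegral_congr_fun measurableSet_Ioo.compl hz]
    simp
  have hae : ∀ᵐ x ∂(bhMeasure a a' b), x ∈ Ioo (0:ℝ) 1 := by
    rw [ae_iff]
    exact haec
  have hat : (0:ℝ) < a + t := by linarith
  have hnum_nonneg : ∀ n, 0 ≤ bhT3 a b (a+t) (a+a') (t+a+b) n := fun n =>
    (bhT3_pos ha hb hat haa' htab n).le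
  have hT_ne_top : (∑' n : ℕ, ENNReal.ofReal (bhT3 a b (a+t) (a+a') (t+a+b) n)) ≠ ⊤ := by
    rcases le_or_gt 0 t with htpos | htneg
    · have hle : ∫⁻ x, ENNReal.ofReal (x ^ t) ∂(bhMeasure a a' b) ≤ 1 := by
        have h1 : ∫⁻ x, ENNReal.ofReal (x ^ t) ∂(bhMeasure a a' b) ≤
            ∫⁻ _, 1 ∂(bhMeasure a a' b) := by
          refine lintegral_mono_ae (hae.mono fun x hx => ?_)
          rw [← ENNReal.ofReal_one]
          exact ENNReal.ofReal_le_ofReal (Real.rpow_le_one hx.1.le hx.2.le htpos)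
        rwa [lintegral_one, hmass] at h1
      rw [hL] at hle
      intro hTtop
      rw [hTtop, ENNReal.mul_top (by
        simp only [ne_eq, ENNReal.ofReal_eq_zero, not_le]
        exact hKpos)] at hle
      exact absurd hle (by simp)
    · have hcomp : ∀ n, bhT3 a b (a+t) (a+a') (t+a+b) n ≤ bhT3 a a b (a+b) (a+a') n := by
        intro n
        induction n with
        | zero => rw [bhT3_zero, bhT3_zero]
        | succ n ih =>
          rw [bhT3_succ ha hb hat haa' htab n,
            bhT3_succ ha ha hb (by positivity) haa' n]
          have key : ((a+t)+(n:ℝ)) * ((a+b)+(n:ℝ)) ≤ (a+(n:ℝ)) * ((t+a+b)+(n:ℝ)) := by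
            nlinarith [mul_nonneg hb.le (neg_nonneg.2 htneg.le)]
          have hfactor : (a+(n:ℝ)) * (b+(n:ℝ)) * ((a+t)+(n:ℝ)) /
              (((n:ℝ)+1) * ((a+a')+(n:ℝ)) * ((t+a+b)+(n:ℝ))) ≤
              (a+(n:ℝ)) * (a+(n:ℝ)) * (b+(n:ℝ)) /
              (((n:ℝ)+1) * ((a+b)+(n:ℝ)) * ((a+a')+(n:ℝ))) := by
            rw [div_le_div_iff₀ (by positivity) (by positivity)]
            nlinarith [mul_le_mul_of_nonneg_left key
              (show (0:ℝ) ≤ (a+(n:ℝ)) * (b+(n:ℝ)) * ((n:ℝ)+1) * ((a+a')+(n:ℝ)) by positivity)]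
          exact mul_le_mul ih hfactor (by positivity) (hden_nonneg n)
      have hbound : (∑' n : ℕ, ENNReal.ofReal (bhT3 a b (a+t) (a+a') (t+a+b) n)) ≤
          ∑' n : ℕ, ENNReal.ofReal (bhT3 a a b (a+b) (a+a') n) :=
        ENNReal.tsum_le_tsum fun n => ENNReal.ofReal_le_ofReal (hcomp n)
      have heq : (∑' n : ℕ, ENNReal.ofReal (bhT3 a a b (a+b) (a+a') n)) =
          ENNReal.ofReal (∑' n : ℕ, bhT3 a a b (a+b) (a+a') n) :=
        (ENNReal.ofReal_tsum_of_nonneg hden_nonneg hden_sum).symm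
      exact ne_top_of_le_ne_top (by rw [heq]; exact ENNReal.ofReal_ne_top) hbound
  have hnum_sum : Summable (bhT3 a b (a+t) (a+a') (t+a+b)) := by
    have h := ENNReal.summable_toReal hT_ne_top
    refine h.congr fun n => ?_
    rw [ENNReal.toReal_ofReal (hnum_nonneg n)]
  have hT_eq : (∑' n : ℕ, ENNReal.ofReal (bhT3 a b (a+t) (a+a') (t+a+b) n)) =
      ENNReal.ofReal (F32one a b (a+t) (a+a') (t+a+b)) := by
    rw [F32one_eq, ENNReal.ofReal_tsum_of_nonneg hnum_nonneg hnum_sum]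
  have h1 : ∫ ω, X ω ^ t ∂μ = ∫ x, x ^ t ∂(μ.map X) :=
    (integral_map hX.aemeasurable
      ((by fun_prop : Measurable fun x : ℝ => x ^ t).aestronglyMeasurable)).symm
  rw [h1, hXlaw]
  have hnn : 0 ≤ᵐ[bhMeasure a a' b] fun x : ℝ => x ^ t :=
    hae.mono fun x hx => Real.rpow_nonneg hx.1.le t
  rw [integral_eq_lintegral_of_nonneg_ae hnn
    ((by fun_prop : Measurable fun x : ℝ => x ^ t).aestronglyMeasurable)]
  rw [hL, hT_eq, ← ENNReal.ofReal_mul hKpos.le]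
  have hFnum_nonneg : 0 ≤ F32one a b (a+t) (a+a') (t+a+b) := by
    rw [F32one_eq]; exact tsum_nonneg hnum_nonneg
  rw [ENNReal.toReal_ofReal (by positivity)]
  unfold Cbh
  field_simp
end
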